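/- Let n ≥ 2 and let H be a real n×n unreduced lower Hessenberg matrix with associated polynomial sequence {q_i}_{0 ≤ i ≤ n}. Then H is diagonalizable over ℝ (i.e. there is an invertible real matrix P and a diagonal real matrix D with H = P D P⁻¹) if and only if q_n has n pairwise distinct real roots (i.e. all roots of the degree-n polynomial q_n are simple and real). -/

import Mathlib

/-- The superdiagonal entry `h_{i+1, i+2}` (1-based) of `H`, with the convention
`h_{n, n+1} = 1`.  Here `i` is 0-based. -/
def superEntry {n : ℕ} (H : Matrix (Fin n) (Fin n) ℝ) (i : ℕ) : ℝ :=
  if h : i + 1 < n then H ⟨i, by omega⟩ ⟨i + 1, h⟩ else 1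

/-- The entry `h_{i+1, j+1}` (1-based) of `H`, with `0` outside the matrix.
Here `i, j` are 0-based. -/
def lowEntry {n : ℕ} (H : Matrix (Fin n) (Fin n) ℝ) (i j : ℕ) : ℝ :=
  if h : i < n ∧ j < n then H ⟨i, h.1⟩ ⟨j, h.2⟩ else 0

/-- `H` is an unreduced lower Hessenberg matrix: `h_{ij} = 0` for `j > i + 1`
(1-based), and all superdiagonal entries `h_{i,i+1}` are nonzero. -/
def IsUnreducedLowerHessenberg {n : ℕ} (H : Matrix (Fin n) (Fin n) ℝ) : Prop :=
  (∀ i j : Fin n, (i : ℕ) + 1 < (j : ℕ) → H i j = 0) ∧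
  (∀ i : ℕ, ∀ h : i + 1 < n, H ⟨i, by omega⟩ ⟨i + 1, h⟩ ≠ 0)

/-- The associated polynomial sequence of a matrix `H` (intended: unreduced lower
Hessenberg): `q 0 = 1` and
`q (i+1) = (1 / h_{i+1,i+2}) * (X * q i − ∑_{j=0}^{i} h_{i+1,j+1} * q j)`
(1-based entries), with the convention `h_{n,n+1} = 1`. -/
noncomputable def assocPoly {n : ℕ} (H : Matrix (Fin n) (Fin n) ℝ) : ℕ → Polynomial ℝ
  | 0 => 1
  | i + 1 =>
      Polynomial.C (superEntry H i)⁻¹ *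
        (Polynomial.X * assocPoly H i -
          ∑ j : Fin (i + 1), Polynomial.C (lowEntry H i j) * assocPoly H j)

open Polynomial Finset Matrix

variable {n : ℕ} {H : Matrix (Fin n) (Fin n) ℝ}

lemma superEntry_ne_zero (hH : IsUnreducedLowerHessenberg H) (i : ℕ) :
    superEntry H i ≠ 0 := by
  unfold superEntry
  split
  · exact hH.2 i ‹_›
  · exact one_ne_zero

lemma natDegree_assocPoly_le (H : Matrix (Fin n) (Fin n) ℝ) (i : ℕ) :
    (assocPoly H i).natDegree ≤ i := by
  induction i using Nat.strong_induction_on with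
  | _ i ih =>
    match i with
    | 0 => simp [assocPoly]
    | i + 1 =>
      rw [assocPoly]
      refine le_trans (natDegree_mul_le) ?_
      simp only [natDegree_C, zero_add]
      refine le_trans (natDegree_sub_le _ _) (max_le ?_ ?_)
      · refine le_trans (natDegree_mul_le) ?_
        have := ih i (by omega)
        simp only [natDegree_X]
        omega
      · refine le_trans (natDegree_sum_le _ _) ?_
        refine Finset.sup_le fun j _ => ?_
        refine le_trans (natDegree_mul_le) ?_
        simp only [natDegree_C, zero_add]
        exact le_trans (ih j (j.2.trans_le (by omega))) (by omega)

lemma coeff_assocPoly_self (i : ℕ) :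
    (assocPoly H i).coeff i = ∏ j ∈ Finset.range i, (superEntry H j)⁻¹ := by
  induction i with
  | zero => simp [assocPoly]
  | succ i ih =>
    rw [assocPoly, Finset.prod_range_succ]
    rw [coeff_C_mul, coeff_sub, coeff_X_mul, ih]
    have hz : (∑ j : Fin (i + 1), Polynomial.C (lowEntry H i j) * assocPoly H j).coeff (i+1) = 0 := by
      rw [finset_sum_coeff]
      refine Finset.sum_eq_zero fun j _ => ?_
      rw [coeff_C_mul]
      have : (assocPoly H j).natDegree < i + 1 := lt_of_le_of_lt (natDegree_assocPoly_le H j) j.2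
      rw [coeff_eq_zero_of_natDegree_lt (by omega)]
      ring
    rw [hz, sub_zero, mul_comm]

lemma assocPoly_ne_zero (hH : IsUnreducedLowerHessenberg H) (i : ℕ) :
    assocPoly H i ≠ 0 := by
  intro h
  have := coeff_assocPoly_self (H := H) i
  rw [h] at this
  simp only [coeff_zero] at this
  exact (Finset.prod_ne_zero_iff.mpr fun j _ =>
    inv_ne_zero (superEntry_ne_zero hH j)) this.symm

lemma natDegree_assocPoly (hH : IsUnreducedLowerHessenberg H) (i : ℕ) :
    (assocPoly H i).natDegree = i := by
  refine le_antisymm (natDegree_assocPoly_le H i) (le_natDegree_of_ne_zero ?_)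
  rw [coeff_assocPoly_self]
  exact Finset.prod_ne_zero_iff.mpr fun j _ => inv_ne_zero (superEntry_ne_zero hH j)

lemma assocPoly_succ_eval (hH : IsUnreducedLowerHessenberg H) (i : ℕ) (x : ℝ) :
    superEntry H i * (assocPoly H (i+1)).eval x =
      x * (assocPoly H i).eval x -
        ∑ j ∈ Finset.range (i+1), lowEntry H i j * (assocPoly H j).eval x := by
  have hs := superEntry_ne_zero hH i
  rw [assocPoly]
  rw [eval_mul, eval_C, eval_sub, eval_mul, eval_X, eval_finset_sum]
  rw [← Fin.sum_univ_eq_sum_range (fun j => lowEntry H i j * (assocPoly H j).eval x) (i+1)]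
  field_simp
  simp only [eval_mul, eval_C]


lemma sum_split (hH : IsUnreducedLowerHessenberg H) (i : Fin n) (g : ℕ → ℝ) :
    ∑ j : Fin n, H i j * g j =
      (∑ j ∈ Finset.range ((i : ℕ) + 1), lowEntry H i j * g j) +
        superEntry H i * g ((i : ℕ) + 1) -
        (if (i : ℕ) + 1 = n then g ((i : ℕ) + 1) else 0) := by
  have hconv : ∑ j : Fin n, H i j * g j = ∑ j ∈ Finset.range n, lowEntry H i j * g j := by
    rw [← Fin.sum_univ_eq_sum_range (fun j => lowEntry H (i : ℕ) j * g j) n]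
    refine Finset.sum_congr rfl fun j _ => ?_
    congr 1
    simp [lowEntry, i.2, j.2]
  rw [hconv]
  by_cases h : (i : ℕ) + 1 < n
  · have hsub : Finset.range ((i : ℕ) + 2) ⊆ Finset.range n := by
      intro t ht; simp only [Finset.mem_range] at *; omega
    rw [← Finset.sum_subset hsub (fun t ht ht2 => ?_)]
    · rw [Finset.sum_range_succ]
      have h1 : lowEntry H (i : ℕ) ((i : ℕ) + 1) = superEntry H i := by
        simp [lowEntry, superEntry, i.2, h]
      rw [h1, if_neg (by omega : ¬((i : ℕ) + 1 = n)), sub_zero]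
    · simp only [Finset.mem_range] at ht ht2
      have hlt : t < n := ht
      have : lowEntry H (i : ℕ) t = 0 := by
        have := hH.1 i ⟨t, hlt⟩ (by simp; omega)
        simp [lowEntry, i.2, hlt, this]
      rw [this, zero_mul]
  · have hne : (i : ℕ) + 1 = n := by have := i.2; omega
    have h1 : superEntry H i = 1 := by simp [superEntry, h]
    rw [if_pos hne, h1, one_mul, add_sub_cancel_right, hne]

lemma row_eval (hH : IsUnreducedLowerHessenberg H) (i : Fin n) (x : ℝ) :
    ∑ j : Fin n, H i j * (assocPoly H j).eval x =
      x * (assocPoly H (i : ℕ)).eval x -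
        (if (i : ℕ) + 1 = n then (assocPoly H n).eval x else 0) := by
  rw [sum_split hH i (fun j => (assocPoly H j).eval x)]
  have := assocPoly_succ_eval hH (i : ℕ) x
  rw [show (∑ j ∈ Finset.range ((i:ℕ)+1), lowEntry H (i:ℕ) j * (assocPoly H j).eval x)
      = x * (assocPoly H (i:ℕ)).eval x - superEntry H i * (assocPoly H ((i:ℕ)+1)).eval x by
    linarith [this]]
  by_cases h : (i : ℕ) + 1 = n
  · rw [if_pos h, if_pos h, h]; ring
  · rw [if_neg h, if_neg h]; ring

lemma mulVec_struct (hH : IsUnreducedLowerHessenberg H) (hn0 : 0 < n) {x : ℝ}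
    {w : Fin n → ℝ} (hw : H.mulVec w = x • w) :
    (∀ j : Fin n, w j = w ⟨0, hn0⟩ * (assocPoly H (j : ℕ)).eval x) ∧
      w ⟨0, hn0⟩ * (assocPoly H n).eval x = 0 := by
  set w0 := w ⟨0, hn0⟩ with hw0
  set W : ℕ → ℝ := fun j => if h : j < n then w ⟨j, h⟩ else 0 with hW
  have hrow : ∀ i : Fin n,
      (∑ j ∈ Finset.range ((i : ℕ) + 1), lowEntry H i j * W j) +
        superEntry H i * W ((i : ℕ) + 1) -
        (if (i : ℕ) + 1 = n then W ((i : ℕ) + 1) else 0) = x * w i := by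
    intro i
    have h1 : H.mulVec w i = x * w i := by rw [hw]; simp
    have h2 : ∑ j : Fin n, H i j * W j = x * w i := by
      rw [show (∑ j : Fin n, H i j * W (j : ℕ)) = ∑ j : Fin n, H i j * w j from
        Finset.sum_congr rfl fun j _ => by simp [hW, j.2]]
      rw [← h1]; simp [Matrix.mulVec, dotProduct]
    rw [← sum_split hH i W, h2]
  have aux : ∀ k : ℕ, ∀ hk : k < n, w ⟨k, hk⟩ = w0 * (assocPoly H k).eval x := by
    intro k
    induction k using Nat.strong_induction_on with
    | _ k ih =>
      match k with
      | 0 => intro hk; simp [assocPoly, hw0]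
      | k + 1 =>
        intro hk
        have hkn : k < n := by omega
        have hr := hrow ⟨k, hkn⟩
        simp only [if_neg (by omega : ¬ k + 1 = n), sub_zero] at hr
        have hWk1 : W (k + 1) = w ⟨k + 1, hk⟩ := by simp [hW, hk]
        have hS : (∑ j ∈ Finset.range (k + 1), lowEntry H k j * (assocPoly H j).eval x) =
            x * (assocPoly H k).eval x - superEntry H k * (assocPoly H (k+1)).eval x := by
          linarith [assocPoly_succ_eval hH k x]
        have hsum : (∑ j ∈ Finset.range (k + 1), lowEntry H k j * W j) =
            w0 * (x * (assocPoly H k).eval x - superEntry H k * (assocPoly H (k+1)).eval x) := by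
          rw [← hS]
          rw [Finset.mul_sum]
          refine Finset.sum_congr rfl fun j hj => ?_
          simp only [Finset.mem_range] at hj
          have hjn : j < n := by omega
          have := ih j (by omega) hjn
          simp only [hW]
          rw [dif_pos hjn, this]; ring
        have hWc : w (⟨k, hkn⟩ : Fin n) = w0 * (assocPoly H k).eval x := ih k (by omega) hkn
        rw [hsum, hWk1] at hr
        rw [hWc] at hr
        have hs := superEntry_ne_zero hH k
        have : superEntry H k * w ⟨k + 1, hk⟩ =
            superEntry H k * (w0 * (assocPoly H (k+1)).eval x) := by ring_nf; ring_nf at hr; linarith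
        exact mul_left_cancel₀ hs this
  constructor
  · intro j
    have := aux (j : ℕ) j.2
    simpa using this
  · have hlast : n - 1 < n := by omega
    have hr := hrow ⟨n - 1, hlast⟩
    simp only [Fin.val_mk, if_pos (by omega : n - 1 + 1 = n)] at hr
    have hWn : W (n - 1 + 1) = 0 := by simp [hW, show ¬ (n - 1 + 1 < n) by omega]
    rw [hWn] at hr
    have hS : (∑ j ∈ Finset.range (n - 1 + 1), lowEntry H (n-1) j * (assocPoly H j).eval x) =
        x * (assocPoly H (n-1)).eval x - superEntry H (n-1) * (assocPoly H (n-1+1)).eval x := by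
      linarith [assocPoly_succ_eval hH (n-1) x]
    have hsum : (∑ j ∈ Finset.range (n - 1 + 1), lowEntry H (n-1) j * W j) =
        w0 * (x * (assocPoly H (n-1)).eval x - superEntry H (n-1) * (assocPoly H (n-1+1)).eval x) := by
      rw [← hS]
      rw [Finset.mul_sum]
      refine Finset.sum_congr rfl fun j hj => ?_
      simp only [Finset.mem_range] at hj
      have hjn : j < n := by omega
      have := aux j hjn
      simp only [hW]
      rw [dif_pos hjn, this]; ring
    have hse : superEntry H (n - 1) = 1 := by
      simp [superEntry, show ¬ (n - 1 + 1 < n) by omega]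
    have hwn : w (⟨n - 1, hlast⟩ : Fin n) = w0 * (assocPoly H (n-1)).eval x := aux (n-1) hlast
    rw [hsum, hse, hwn, show n - 1 + 1 = n by omega] at hr
    ring_nf at hr ⊢
    linarith

lemma ker_triv {P : Matrix (Fin n) (Fin n) ℝ} (hP : IsUnit P.det)
    {c : Fin n → ℝ} (hc : P.mulVec c = 0) : c = 0 := by
  have h1 : P⁻¹ * P = 1 := Matrix.nonsing_inv_mul P hP
  calc c = (1 : Matrix (Fin n) (Fin n) ℝ).mulVec c := by rw [Matrix.one_mulVec]
    _ = (P⁻¹ * P).mulVec c := by rw [h1]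
    _ = P⁻¹.mulVec (P.mulVec c) := by rw [Matrix.mulVec_mulVec]
    _ = 0 := by rw [hc, Matrix.mulVec_zero]

lemma isUnit_evalMatrix_det (hH : IsUnreducedLowerHessenberg H)
    (d : Fin n → ℝ) (hd : Function.Injective d) :
    IsUnit (Matrix.of fun j i : Fin n => (assocPoly H (j : ℕ)).eval (d i)).det := by
  classical
  set L : Matrix (Fin n) (Fin n) ℝ := Matrix.of fun j k : Fin n => (assocPoly H (j : ℕ)).coeff k
  have hfac : (Matrix.of fun j i : Fin n => (assocPoly H (j : ℕ)).eval (d i)) =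
      L * (Matrix.vandermonde d)ᵀ := by
    ext j i
    simp only [Matrix.mul_apply, Matrix.of_apply, Matrix.transpose_apply, Matrix.vandermonde, L,
      Matrix.of_apply]
    rw [Polynomial.eval_eq_sum_range' (lt_of_le_of_lt (natDegree_assocPoly_le H j) j.2) (d i)]
    rw [← Fin.sum_univ_eq_sum_range (fun k => (assocPoly H (j : ℕ)).coeff k * d i ^ k) n]
  have hLdet : L.det = ∏ j : Fin n, (assocPoly H (j : ℕ)).coeff j := by
    apply Matrix.det_of_lowerTriangular
    intro a b hab
    simp only [OrderDual.toDual_lt_toDual] at hab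
    simp only [L, Matrix.of_apply]
    exact coeff_eq_zero_of_natDegree_lt
      (lt_of_le_of_lt (natDegree_assocPoly_le H a) hab)
  have hL : L.det ≠ 0 := by
    rw [hLdet]
    refine Finset.prod_ne_zero_iff.mpr fun j _ => ?_
    rw [coeff_assocPoly_self]
    exact Finset.prod_ne_zero_iff.mpr fun l _ => inv_ne_zero (superEntry_ne_zero hH l)
  have hV : (Matrix.vandermonde d).det ≠ 0 := by
    rw [Matrix.det_vandermonde]
    refine Finset.prod_ne_zero_iff.mpr fun i _ => Finset.prod_ne_zero_iff.mpr fun j hj => ?_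
    exact sub_ne_zero_of_ne fun h => (Finset.mem_Ioi.mp hj).ne' (hd h)
  rw [hfac, Matrix.det_mul, Matrix.det_transpose]
  exact isUnit_iff_ne_zero.mpr (mul_ne_zero hL hV)



/-- **Hyperbolicity criterion in terms of the associated polynomial.**
A real `n × n` unreduced lower Hessenberg matrix `H` is diagonalizable over `ℝ`
(there exist an invertible real matrix `P` and a diagonal real matrix `D` with
`H = P * D * P⁻¹`) if and only if its last associated polynomial `q_n` has `n`
pairwise distinct real roots (all roots of `q_n` are simple and real). -/
theorem hessenberg_diagonalizable_iff_assocPoly_distinct_real_roots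
    (n : ℕ) (hn : 2 ≤ n)
    (H : Matrix (Fin n) (Fin n) ℝ) (hH : IsUnreducedLowerHessenberg H) :
    (∃ P D : Matrix (Fin n) (Fin n) ℝ, IsUnit P.det ∧ D.IsDiag ∧ H = P * D * P⁻¹) ↔
    (Multiset.card (assocPoly H n).roots = n ∧ (assocPoly H n).roots.Nodup) := by
  classical
  have hn0 : 0 < n := by omega
  have hq0 : assocPoly H n ≠ 0 := assocPoly_ne_zero hH n
  have hdeg : (assocPoly H n).natDegree = n := natDegree_assocPoly hH n
  constructor
  · rintro ⟨P, D, hP, hD, hEq⟩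
    set d : Fin n → ℝ := fun i => D i i with hd
    have hDdiag : D = Matrix.diagonal d := (hD.diagonal_diag).symm
    have hHP : H * P = P * D := by
      rw [hEq, Matrix.mul_assoc (P * D) P⁻¹ P, Matrix.nonsing_inv_mul P hP, Matrix.mul_one]
    have hcol : ∀ k : Fin n, H.mulVec (fun j => P j k) = d k • (fun j => P j k) := by
      intro k
      funext i
      have h1 : (H * P) i k = (P * D) i k := by rw [hHP]
      rw [hDdiag, Matrix.mul_diagonal] at h1
      rw [Matrix.mul_apply] at h1
      simp only [Matrix.mulVec, dotProduct, Pi.smul_apply, smul_eq_mul]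
      rw [h1]; ring
    have hstruct := fun k => mulVec_struct hH hn0 (hcol k)
    have hc0 : ∀ k : Fin n, P ⟨0, hn0⟩ k ≠ 0 := by
      intro k hzero
      have hcolzero : ∀ j : Fin n, P j k = 0 := by
        intro j; rw [(hstruct k).1 j, hzero, zero_mul]
      have hmv : P.mulVec (fun t => if t = k then 1 else 0) = 0 := by
        funext t
        simp only [Matrix.mulVec, dotProduct, mul_ite, mul_one, mul_zero,
          Finset.sum_ite_eq', Finset.mem_univ, if_pos, Pi.zero_apply]
        exact hcolzero t
      have hk := congrFun (ker_triv hP hmv) k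
      simp at hk
    have hroot : ∀ k : Fin n, (assocPoly H n).eval (d k) = 0 := by
      intro k
      rcases mul_eq_zero.mp (hstruct k).2 with h | h
      · exact absurd h (hc0 k)
      · exact h
    have hinj : Function.Injective d := by
      intro a b hab
      by_contra hne
      set ca := P ⟨0, hn0⟩ a with hca
      set cb := P ⟨0, hn0⟩ b with hcb
      set c : Fin n → ℝ := fun t =>
        cb * (if t = a then 1 else 0) - ca * (if t = b then 1 else 0) with hc
      have hmv : P.mulVec c = 0 := by
        funext t
        have h1 := (hstruct a).1 t
        have h2 := (hstruct b).1 t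
        simp only [Matrix.mulVec, dotProduct, hc, mul_sub, Finset.sum_sub_distrib,
          mul_ite, mul_one, mul_zero, ← Finset.mul_sum, Finset.sum_ite_eq',
          Finset.mem_univ, if_pos, Pi.zero_apply]
        rw [h1, h2, hab]
        ring
      have hcz := congrFun (ker_triv hP hmv) b
      simp [hc, (Ne.symm hne : b ≠ a)] at hcz
      exact hc0 a hcz
    set s : Finset ℝ := Finset.univ.image d with hs
    have hcard : s.card = n := by
      rw [hs, Finset.card_image_of_injective _ hinj, Finset.card_univ, Fintype.card_fin]
    have hle : s.val ≤ (assocPoly H n).roots := by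
      rw [Multiset.le_iff_count]
      intro a
      by_cases ha : a ∈ s
      · rw [Multiset.count_eq_one_of_mem s.nodup ha]
        refine Multiset.count_pos.mpr ?_
        rw [Polynomial.mem_roots hq0]
        obtain ⟨k, _, rfl⟩ := Finset.mem_image.mp ha
        exact hroot k
      · rw [Multiset.count_eq_zero_of_notMem ha]
        exact Nat.zero_le _
    have hcards : Multiset.card (assocPoly H n).roots ≤ n := by
      have := (assocPoly H n).card_roots'
      omega
    have h2 : Multiset.card (assocPoly H n).roots ≤ Multiset.card s.val := by
      rw [← Finset.card_def, hcard]; exact hcards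
    have heq : (assocPoly H n).roots = s.val :=
      (Multiset.eq_of_le_of_card_le hle h2).symm
    rw [heq]
    exact ⟨hcard, s.nodup⟩
  · rintro ⟨hcard, hnodup⟩
    set M := (assocPoly H n).roots with hM
    have hlen : M.toList.length = n := by rw [Multiset.length_toList]; exact hcard
    set d : Fin n → ℝ := fun i => M.toList.get (Fin.cast hlen.symm i) with hd
    have hinj : Function.Injective d := by
      intro a b hab
      have hnl : M.toList.Nodup := Multiset.coe_nodup.mp (by rw [Multiset.coe_toList]; exact hnodup)
      have := (List.nodup_iff_injective_get.mp hnl) hab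
      exact Fin.cast_injective _ (by exact this)
    have hroot : ∀ i : Fin n, (assocPoly H n).eval (d i) = 0 := by
      intro i
      have hm : d i ∈ M := by
        have : M.toList.get (Fin.cast hlen.symm i) ∈ M.toList := List.get_mem _ _
        exact Multiset.mem_toList.mp this
      exact (Polynomial.mem_roots hq0).mp hm
    set P : Matrix (Fin n) (Fin n) ℝ :=
      Matrix.of fun j i : Fin n => (assocPoly H (j : ℕ)).eval (d i) with hPdef
    have hP : IsUnit P.det := isUnit_evalMatrix_det hH d hinj
    refine ⟨P, Matrix.diagonal d, hP, Matrix.isDiag_diagonal d, ?_⟩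
    have hHP : H * P = P * Matrix.diagonal d := by
      ext i k
      rw [Matrix.mul_apply, Matrix.mul_diagonal]
      simp only [hPdef, Matrix.of_apply]
      rw [row_eval hH i (d k)]
      by_cases h : (i : ℕ) + 1 = n
      · rw [if_pos h, hroot k]; ring
      · rw [if_neg h]; ring
    calc H = H * (P * P⁻¹) := by rw [Matrix.mul_nonsing_inv P hP, Matrix.mul_one]
      _ = (H * P) * P⁻¹ := by rw [Matrix.mul_assoc]
      _ = P * Matrix.diagonal d * P⁻¹ := by rw [hHP]
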